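/- Let π be a Nash equilibrium with equilibrium density f, and for each j let C_j = min_{y ∈ ℝ} J(x_j, y, f) and E_j = argmin_{y ∈ ℝ} J(x_j, y, f). Then for every y ∈ ℝ, f(y) = max{0, C_1 − (x_1 − y)^2, …, C_n − (x_n − y)^2}, and E_j = {y ∈ ℝ : f(y) = C_j − (x_j − y)^2} for each j. -/

import Mathlib

open MeasureTheory Set

/-- The cost `J(x, y, f) = (x - y)^2 + f(y)`. -/
noncomputable def Jcost (f : ℝ → ℝ) (x y : ℝ) : ℝ := (x - y) ^ 2 + f y

/-- The support of a measure `π` on `ℝ × ℝ`: points all of whose open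
neighborhoods have positive measure. -/
def msupport (π : Measure (ℝ × ℝ)) : Set (ℝ × ℝ) :=
  {p | ∀ U : Set (ℝ × ℝ), IsOpen U → p ∈ U → 0 < π U}

/-- `π` is a Nash equilibrium with equilibrium density `f` for the initial
measure `m = ∑ j, a_j δ_{x_j}`:
`π` is a Borel probability measure on `ℝ × ℝ`, `f` is continuous, nonnegative,
with total integral 1; the first marginal of `π` is `m`; the second marginal of
`π` has density `f` with respect to Lebesgue measure; and for `π`-a.e. `(x, y)`,
`y` minimizes `J(x, ·, f)`. -/
def IsNash (n : ℕ) (x a : Fin n → ℝ) (π : Measure (ℝ × ℝ)) (f : ℝ → ℝ) : Prop :=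
  IsProbabilityMeasure π ∧
  Continuous f ∧ (∀ y, 0 ≤ f y) ∧ (∫ y, f y) = 1 ∧
  π.map Prod.fst = ∑ j : Fin n, ENNReal.ofReal (a j) • Measure.dirac (x j) ∧
  π.map Prod.snd = volume.withDensity (fun y => ENNReal.ofReal (f y)) ∧
  (∀ᵐ p ∂π, ∀ z : ℝ, Jcost f p.1 p.2 ≤ Jcost f p.1 z)

/-- With `C_j = min_y J(x_j, y, f)` and `E_j = argmin_y J(x_j, y, f)`:
`f(y) = max{0, C_1 - (x_1 - y)^2, …, C_n - (x_n - y)^2}` for every `y`, and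
`E_j = {y : f(y) = C_j - (x_j - y)^2}` for each `j`. -/
theorem stmt_3 (n : ℕ) (hn : 1 ≤ n) (x : Fin n → ℝ) (hx : StrictMono x)
    (a : Fin n → ℝ) (ha : ∀ j, 0 < a j) (hsum : ∑ j, a j = 1)
    (π : Measure (ℝ × ℝ)) (f : ℝ → ℝ) (hNash : IsNash n x a π f)
    (C : Fin n → ℝ)
    (hC : ∀ j, IsLeast (Set.range fun y => Jcost f (x j) y) (C j)) :
    (∀ y : ℝ, f y = max (⨆ j : Fin n, (C j - (x j - y) ^ 2)) 0) ∧
    (∀ j, {y : ℝ | Jcost f (x j) y = C j} =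
      {y : ℝ | f y = C j - (x j - y) ^ 2}) := by
  obtain ⟨hprob, hf_cont, hf_nonneg, hf_int, hfst, hsnd, hmin⟩ := hNash
  have hne : Nonempty (Fin n) := ⟨⟨0, hn⟩⟩
  have hbdd : ∀ y : ℝ, BddAbove (Set.range fun j : Fin n => C j - (x j - y) ^ 2) :=
    fun y => (Set.finite_range _).bddAbove
  -- lower bound : every C j - (x j - y)^2 ≤ f y
  have hlow : ∀ (j : Fin n) (y : ℝ), C j - (x j - y) ^ 2 ≤ f y := by
    intro j y
    have := (hC j).2 ⟨y, rfl⟩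
    simp only [Jcost] at this
    linarith
  have hsup_le : ∀ y : ℝ, max (⨆ j : Fin n, (C j - (x j - y) ^ 2)) 0 ≤ f y :=
    fun y => max_le (ciSup_le fun j => hlow j y) (hf_nonneg y)
  -- characterization of strict inequality
  have hlt_iff : ∀ y : ℝ, max (⨆ j : Fin n, (C j - (x j - y) ^ 2)) 0 < f y ↔
      (0 < f y ∧ ∀ j, C j - (x j - y) ^ 2 < f y) := by
    intro y
    constructor
    · intro h
      exact ⟨lt_of_le_of_lt (le_max_right _ _) h,
        fun j => lt_of_le_of_lt (le_trans (le_ciSup (hbdd y) j) (le_max_left _ _)) h⟩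
    · rintro ⟨h0, hj⟩
      obtain ⟨j0, hj0⟩ := Finite.exists_max (fun j : Fin n => C j - (x j - y) ^ 2)
      exact max_lt (lt_of_le_of_lt (ciSup_le hj0) (hj j0)) h0
  -- the "bad" set
  set S : Set ℝ := {y : ℝ | max (⨆ j : Fin n, (C j - (x j - y) ^ 2)) 0 < f y} with hS_def
  have hS_eq : S = {y : ℝ | 0 < f y} ∩ ⋂ j : Fin n, {y : ℝ | C j - (x j - y) ^ 2 < f y} := by
    ext y
    simp only [hS_def, Set.mem_setOf_eq, Set.mem_inter_iff, Set.mem_iInter, hlt_iff y]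
  have hS_open : IsOpen S := by
    rw [hS_eq]
    refine IsOpen.inter (isOpen_lt continuous_const hf_cont) (isOpen_iInter_of_finite fun j => ?_)
    exact isOpen_lt (by continuity) hf_cont
  have hS_meas : MeasurableSet S := hS_open.measurableSet
  -- a.e., the first coordinate is in the range of x
  have hfst_ae : ∀ᵐ p ∂π, p.1 ∈ Set.range x := by
    have hTmeas : MeasurableSet ((Set.range x)ᶜ) := (Set.finite_range x).measurableSet.compl
    have h1 : π.map Prod.fst ((Set.range x)ᶜ) = 0 := by
      rw [hfst]
      rw [Measure.coe_finset_sum, Finset.sum_apply]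
      refine Finset.sum_eq_zero fun j _ => ?_
      rw [Measure.smul_apply, Measure.dirac_apply' _ hTmeas]
      have : x j ∉ (Set.range x)ᶜ := by simp
      rw [Set.indicator_of_notMem this]
      simp
    have h2 : π (Prod.fst ⁻¹' (Set.range x)ᶜ) = 0 := by
      rw [← Measure.map_apply measurable_fst hTmeas]; exact h1
    exact ae_iff.mpr h2
  -- a.e., the second coordinate is not in S
  have hsnd_ae : ∀ᵐ p ∂π, p.2 ∉ S := by
    filter_upwards [hfst_ae, hmin] with p hp1 hp2
    obtain ⟨j, hj⟩ := hp1
    intro hpS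
    have hCle : C j ≤ Jcost f (x j) p.2 := (hC j).2 ⟨p.2, rfl⟩
    obtain ⟨y0, hy0⟩ := (hC j).1
    have hle : Jcost f (x j) p.2 ≤ C j := by
      rw [← hy0, hj]; exact hp2 y0
    have heq : f p.2 = C j - (x j - p.2) ^ 2 := by
      have : Jcost f (x j) p.2 = C j := le_antisymm hle hCle
      simp only [Jcost] at this
      linarith
    have : C j - (x j - p.2) ^ 2 < f p.2 := ((hlt_iff p.2).mp hpS).2 j
    linarith
  -- hence π (snd ⁻¹' S) = 0
  have hpre : π (Prod.snd ⁻¹' S) = 0 := by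
    have := ae_iff.mp hsnd_ae
    simp [not_not] at this
    exact this
  -- so the integral of f over S vanishes
  have hint0 : ∫⁻ y in S, ENNReal.ofReal (f y) = 0 := by
    have h1 : π.map Prod.snd S = 0 := by
      rw [Measure.map_apply measurable_snd hS_meas]; exact hpre
    rw [hsnd] at h1
    rw [withDensity_apply _ hS_meas] at h1
    exact h1
  -- S must be empty
  have hS_empty : S = ∅ := by
    by_contra h
    obtain ⟨y0, hy0⟩ := Set.nonempty_iff_ne_empty.mpr h
    have hvolpos : 0 < volume S := hS_open.measure_pos volume ⟨y0, hy0⟩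
    have hmeasf : Measurable fun y => ENNReal.ofReal (f y) :=
      ENNReal.measurable_ofReal.comp hf_cont.measurable
    have hae : (fun y => ENNReal.ofReal (f y)) =ᵐ[volume.restrict S] 0 :=
      (lintegral_eq_zero_iff hmeasf).mp hint0
    have h0 : (volume.restrict S) {y | ENNReal.ofReal (f y) ≠ 0} = 0 := ae_iff.mp hae
    have hsub : S ⊆ {y | ENNReal.ofReal (f y) ≠ 0} := by
      intro y hy
      have : 0 < f y := ((hlt_iff y).mp hy).1
      simp [Set.mem_setOf_eq, ENNReal.ofReal_eq_zero, not_le, this]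
    have : (volume.restrict S) S = 0 := measure_mono_null hsub h0
    rw [Measure.restrict_apply_self] at this
    exact absurd this hvolpos.ne'
  constructor
  · intro y
    refine le_antisymm ?_ (hsup_le y)
    by_contra h
    push_neg at h
    have : y ∈ S := h
    rw [hS_empty] at this
    exact this
  · intro j
    ext y
    simp only [Set.mem_setOf_eq, Jcost]
    constructor <;> intro h <;> linarith
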